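/- Let φ ∈ ℝ^m with t := ‖φ‖² satisfying 1/2 < t ≤ 1, let σ > 0 satisfy σ² ≥ −log(2t − 1)/t, and let ω, ω' ∈ ℝ^m be independent, each distributed according to the product measure whose m coordinates are i.i.d. real Gaussians with mean 0 and variance σ². Then E[(1/2)(cos(⟨ω − ω', φ⟩) + 1)] = (1/2)(exp(−σ² t) + 1) ≤ t. -/

import Mathlib

open Real MeasureTheory ProbabilityTheory
open scoped RealInnerProductSpace NNReal ENNReal

section helpers
open Complex

lemma gauss_cexp' (v : ℝ≥0) (c : ℝ) :
    ∫ x : ℝ, Complex.exp (Complex.I * c * x) ∂(gaussianReal 0 v)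
      = Complex.exp (-(v : ℝ) * c ^ 2 / 2) := by
  rcases eq_or_ne v 0 with hv | hv
  · simp [hv, gaussianReal_zero_var]
  · have hv0 : (0 : ℝ) < (v : ℝ) := by positivity
    rw [gaussianReal_of_var_ne_zero _ hv]
    have hmeas : Measurable fun x => (gaussianPDFReal 0 v x).toNNReal :=
      (measurable_gaussianPDFReal 0 v).real_toNNReal
    have hd : (gaussianPDF 0 v) = fun x => (((gaussianPDFReal 0 v x).toNNReal : ℝ≥0) : ℝ≥0∞) := by
      funext x; simp [gaussianPDF, ENNReal.ofReal]
    rw [hd, integral_withDensity_eq_integral_smul hmeas]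
    have hsmul : ∀ x : ℝ, (gaussianPDFReal 0 v x).toNNReal • Complex.exp (Complex.I * c * x)
        = ((Real.sqrt (2 * π * v))⁻¹ : ℂ) *
          (Complex.exp (Complex.I * c * x) * Complex.exp (-(1 / (2 * (v:ℝ)) : ℂ) * x ^ 2)) := by
      intro x
      have hxv : ((-(x-0)^2/(2*(v:ℝ)) : ℝ) : ℂ) = -(1 / (2 * (v:ℝ)) : ℂ) * x ^ 2 := by
        have : ((v:ℝ):ℂ) ≠ 0 := by exact_mod_cast hv0.ne'
        push_cast
        field_simp
        ring
      rw [NNReal.smul_def, Real.coe_toNNReal _ (gaussianPDFReal_nonneg 0 v x),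
        Complex.real_smul, gaussianPDFReal, Complex.ofReal_mul, Complex.ofReal_inv,
        Complex.ofReal_exp, hxv]
      ring
    simp_rw [hsmul]
    rw [integral_const_mul, fourierIntegral_gaussian (by simp; positivity) (c : ℂ)]
    have h1 : ((π : ℂ) / (1 / (2 * (v:ℝ)))) ^ (1/2 : ℂ) = (Real.sqrt (2 * π * v) : ℂ) := by
      have h2 : ((π : ℂ) / (1 / (2 * (v:ℝ)))) = ((2 * π * v : ℝ) : ℂ) := by
        push_cast; field_simp
      rw [h2, show (1/2:ℂ) = ((1/2:ℝ):ℂ) by norm_num,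
        ← Complex.ofReal_cpow (by positivity), ← Real.sqrt_eq_rpow]
    rw [h1]
    have h3 : -(c:ℂ) ^ 2 / (4 * (1 / (2 * (v:ℝ)))) = (-(v : ℝ) * c ^ 2 / 2 : ℝ) := by
      have : ((v:ℝ):ℂ) ≠ 0 := by exact_mod_cast hv0.ne'
      push_cast
      field_simp
      ring
    rw [h3]
    have h4 : ((Real.sqrt (2 * π * v))⁻¹ : ℂ) * (Real.sqrt (2 * π * v) : ℂ) = 1 := by
      rw [inv_mul_cancel₀]
      exact_mod_cast (Real.sqrt_pos.mpr (by positivity)).ne'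
    rw [← mul_assoc, h4, one_mul]
    congr 1
    push_cast
    ring

lemma my_pi_integral' {n : ℕ} (μ : Measure ℝ) [SigmaFinite μ] (f : Fin n → ℝ → ℂ) :
    ∫ x : Fin n → ℝ, ∏ i, f i (x i) ∂(Measure.pi fun _ => μ)
      = ∏ i, ∫ x, f i x ∂μ := by
  induction n with
  | zero => simp [Measure.pi_empty_univ, Measure.real]
  | succ n n_ih =>
      calc
        _ = ∫ x : ℝ × (Fin n → ℝ), f 0 x.1 * ∏ i : Fin n, f i.succ (x.2 i)
            ∂(μ.prod (Measure.pi fun _ => μ)) := by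
          rw [← ((measurePreserving_piFinSuccAbove (fun _ : Fin (n+1) => μ)
            0).symm).integral_comp']
          simp only [MeasurableEquiv.piFinSuccAbove_symm_apply, Fin.insertNthEquiv,
            Fin.prod_univ_succ, Fin.insertNth_zero, Equiv.coe_fn_mk, Fin.cons_succ,
            Fin.zero_succAbove, Fin.cons_zero]
          rfl
        _ = (∫ x, f 0 x ∂μ) * ∏ i : Fin n, ∫ x, f i.succ x ∂μ := by
          rw [← n_ih, ← integral_prod_mul]
        _ = ∏ i, ∫ x, f i x ∂μ := by rw [Fin.prod_univ_succ]

end helpers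

theorem deep_spectral_kernel_diagonal_decreasing (m : ℕ)
    (φ : EuclideanSpace ℝ (Fin m)) (σ : ℝ) (hσ : 0 < σ)
    (ht1 : 1 / 2 < ‖φ‖ ^ 2) (ht2 : ‖φ‖ ^ 2 ≤ 1)
    (hvar : σ ^ 2 ≥ -Real.log (2 * ‖φ‖ ^ 2 - 1) / ‖φ‖ ^ 2) :
    (∫ p : EuclideanSpace ℝ (Fin m) × EuclideanSpace ℝ (Fin m),
        (1 / 2) * (Real.cos ⟪p.1 - p.2, φ⟫ + 1)
        ∂(Measure.prod
            (Measure.map (WithLp.toLp 2) (Measure.pi fun _ : Fin m => gaussianReal 0 ⟨σ ^ 2, sq_nonneg σ⟩) :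
              Measure (EuclideanSpace ℝ (Fin m)))
            (Measure.map (WithLp.toLp 2) (Measure.pi fun _ : Fin m => gaussianReal 0 ⟨σ ^ 2, sq_nonneg σ⟩) :
              Measure (EuclideanSpace ℝ (Fin m))))
      = (1 / 2) * (Real.exp (-(σ ^ 2) * ‖φ‖ ^ 2) + 1))
    ∧ (1 / 2) * (Real.exp (-(σ ^ 2) * ‖φ‖ ^ 2) + 1) ≤ ‖φ‖ ^ 2 := by
  have ht0 : (0:ℝ) < ‖φ‖ ^ 2 := lt_trans (by norm_num) ht1
  constructor
  · set v : ℝ≥0 := ⟨σ ^ 2, sq_nonneg σ⟩ with hvdef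
    set ν : Measure (EuclideanSpace ℝ (Fin m)) :=
      Measure.map (WithLp.toLp 2) (Measure.pi fun _ : Fin m => gaussianReal 0 v) with hν
    haveI hprob : IsProbabilityMeasure ν :=
      Measure.isProbabilityMeasure_map (WithLp.measurable_toLp 2 (Fin m → ℝ)).aemeasurable
    have hnorm : ∑ i, (φ i) ^ 2 = ‖φ‖ ^ 2 := by
      rw [← real_inner_self_eq_norm_sq]
      rw [real_inner_self_eq_norm_sq, EuclideanSpace.real_norm_sq_eq]
    -- characteristic function of the product Gaussian
    have hchar : ∀ s : ℝ, s ^ 2 = 1 →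
        ∫ ω, Complex.exp (Complex.I * (s * ⟪ω, φ⟫)) ∂ν
          = Complex.exp ((-(σ ^ 2) * ‖φ‖ ^ 2 / 2 : ℝ)) := by
      intro s hs
      have hinner : ∀ ω : EuclideanSpace ℝ (Fin m), ⟪ω, φ⟫ = ∑ i, ω i * φ i := by
        intro ω
        simp [PiLp.inner_apply, RCLike.inner_apply, mul_comm]
      have hpi := my_pi_integral' (gaussianReal 0 v)
        (fun i x => Complex.exp (Complex.I * ((s * φ i : ℝ)) * x))
      have hgauss : ∀ i : Fin m, ∫ x : ℝ,
            Complex.exp (Complex.I * ((s * φ i : ℝ)) * x) ∂(gaussianReal 0 v)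
          = Complex.exp (-(((v : ℝ)) : ℂ) * (((s * φ i : ℝ)) : ℂ) ^ 2 / 2) :=
        fun i => gauss_cexp' v (s * φ i)
      have hleft : ∫ ω, Complex.exp (Complex.I * (s * ⟪ω, φ⟫)) ∂ν
          = ∫ ω : Fin m → ℝ, ∏ i, Complex.exp (Complex.I * ((s * φ i : ℝ)) * ω i)
            ∂(Measure.pi fun _ => gaussianReal 0 v) := by
        rw [hν, show (WithLp.toLp 2 : (Fin m → ℝ) → EuclideanSpace ℝ (Fin m))
          = ⇑(MeasurableEquiv.toLp 2 (Fin m → ℝ)) from rfl, integral_map_equiv]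
        refine integral_congr_ae (Filter.Eventually.of_forall fun ω => ?_)
        dsimp only
        simp only [MeasurableEquiv.toLp_apply, PiLp.toLp_apply]
        rw [hinner (WithLp.toLp 2 ω), ← Complex.exp_sum]
        simp only [WithLp.ofLp_toLp]
        congr 1
        push_cast [Finset.mul_sum]
        exact Finset.sum_congr rfl fun i _ => by ring
      have hsum : ∑ i, (-(v : ℝ) * (s * φ i) ^ 2 / 2) = -(σ ^ 2) * ‖φ‖ ^ 2 / 2 := by
        have hv : (v : ℝ) = σ ^ 2 := rfl
        simp_rw [mul_pow, hs, hv, one_mul]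
        rw [← Finset.sum_div, ← Finset.mul_sum, hnorm]
      calc ∫ ω, Complex.exp (Complex.I * (s * ⟪ω, φ⟫)) ∂ν
          = ∏ i, ∫ x : ℝ, Complex.exp (Complex.I * ((s * φ i : ℝ)) * x)
              ∂(gaussianReal 0 v) := by rw [hleft]; exact hpi
        _ = ∏ i, Complex.exp (((-(v : ℝ) * (s * φ i) ^ 2 / 2 : ℝ) : ℂ)) := by
            refine Finset.prod_congr rfl fun i _ => ?_
            rw [hgauss i]
            congr 1
            push_cast
            ring
        _ = Complex.exp (((∑ i, (-(v : ℝ) * (s * φ i) ^ 2 / 2) : ℝ) : ℂ)) := by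
            rw [← Complex.exp_sum, Complex.ofReal_sum]
        _ = Complex.exp ((-(σ ^ 2) * ‖φ‖ ^ 2 / 2 : ℝ)) := by rw [hsum]
    -- the two marginal integrals
    have hZ1 : ∫ ω, Complex.exp (Complex.I * ((⟪ω, φ⟫ : ℝ))) ∂ν
        = Complex.exp ((-(σ ^ 2) * ‖φ‖ ^ 2 / 2 : ℝ)) := by
      have := hchar 1 (by norm_num)
      simpa using this
    have hZ2 : ∫ ω, Complex.exp (-(Complex.I * ((⟪ω, φ⟫ : ℝ)))) ∂ν
        = Complex.exp ((-(σ ^ 2) * ‖φ‖ ^ 2 / 2 : ℝ)) := by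
      have := hchar (-1) (by norm_num)
      have heq : ∀ ω : EuclideanSpace ℝ (Fin m),
          Complex.exp (Complex.I * (((-1 : ℝ)) * ((⟪ω, φ⟫ : ℝ))))
            = Complex.exp (-(Complex.I * ((⟪ω, φ⟫ : ℝ)))) := by
        intro ω; congr 1; push_cast; ring
      rw [← this]
      exact integral_congr_ae (Filter.Eventually.of_forall fun ω => (heq ω).symm)
    -- integrability facts
    have hcont : Continuous fun p : EuclideanSpace ℝ (Fin m) × EuclideanSpace ℝ (Fin m) =>
        (⟪p.1 - p.2, φ⟫ : ℝ) :=
      Continuous.inner (continuous_fst.sub continuous_snd) continuous_const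
    have hintC : Integrable (fun p : EuclideanSpace ℝ (Fin m) × EuclideanSpace ℝ (Fin m) =>
        Complex.exp (Complex.I * ((⟪p.1, φ⟫ : ℝ))) * Complex.exp (-(Complex.I * ((⟪p.2, φ⟫ : ℝ)))))
        (ν.prod ν) := by
      have hc1 : Continuous fun p : EuclideanSpace ℝ (Fin m) × EuclideanSpace ℝ (Fin m) =>
          Complex.I * (((⟪p.1, φ⟫ : ℝ)) : ℂ) :=
        continuous_const.mul (Complex.continuous_ofReal.comp
          (Continuous.inner continuous_fst continuous_const))
      have hc2 : Continuous fun p : EuclideanSpace ℝ (Fin m) × EuclideanSpace ℝ (Fin m) =>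
          -(Complex.I * (((⟪p.2, φ⟫ : ℝ)) : ℂ)) :=
        (continuous_const.mul (Complex.continuous_ofReal.comp
          (Continuous.inner continuous_snd continuous_const))).neg
      refine Integrable.mono' (integrable_const 1) ?_ ?_
      · exact ((Complex.continuous_exp.comp hc1).mul
          (Complex.continuous_exp.comp hc2)).aestronglyMeasurable
      · refine Filter.Eventually.of_forall fun p => ?_
        rw [norm_mul]
        simp [Complex.norm_exp]
    have hre : ∀ p : EuclideanSpace ℝ (Fin m) × EuclideanSpace ℝ (Fin m),
        Real.cos (⟪p.1 - p.2, φ⟫ : ℝ)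
          = (Complex.exp (Complex.I * ((⟪p.1, φ⟫ : ℝ)))
              * Complex.exp (-(Complex.I * ((⟪p.2, φ⟫ : ℝ))))).re := by
      intro p
      rw [← Complex.exp_add]
      have harg : Complex.I * ((⟪p.1, φ⟫ : ℝ)) + -(Complex.I * ((⟪p.2, φ⟫ : ℝ)))
          = (((⟪p.1, φ⟫ - ⟪p.2, φ⟫ : ℝ)) : ℂ) * Complex.I := by push_cast; ring
      rw [harg, Complex.exp_ofReal_mul_I_re, inner_sub_left]
    have hcos : ∫ p : EuclideanSpace ℝ (Fin m) × EuclideanSpace ℝ (Fin m),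
        Real.cos (⟪p.1 - p.2, φ⟫ : ℝ) ∂(ν.prod ν) = Real.exp (-(σ ^ 2) * ‖φ‖ ^ 2) := by
      simp_rw [hre]
      have h := integral_re hintC
      simp only [RCLike.re_to_complex] at h
      rw [h, integral_prod_mul
          (f := fun ω : EuclideanSpace ℝ (Fin m) => Complex.exp (Complex.I * ((⟪ω, φ⟫ : ℝ) : ℂ)))
          (g := fun ω : EuclideanSpace ℝ (Fin m) =>
            Complex.exp (-(Complex.I * ((⟪ω, φ⟫ : ℝ) : ℂ)))),
        hZ1, hZ2, ← Complex.exp_add, ← Complex.ofReal_add, ← Complex.ofReal_exp,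
        Complex.ofReal_re]
      congr 1
      ring
    have hintcos : Integrable (fun p : EuclideanSpace ℝ (Fin m) × EuclideanSpace ℝ (Fin m) =>
        Real.cos (⟪p.1 - p.2, φ⟫ : ℝ)) (ν.prod ν) := by
      refine Integrable.mono' (integrable_const 1) ?_ ?_
      · exact (Real.continuous_cos.comp hcont).aestronglyMeasurable
      · exact Filter.Eventually.of_forall fun p => by
          simpa using Real.abs_cos_le_one _
    have : ∫ p : EuclideanSpace ℝ (Fin m) × EuclideanSpace ℝ (Fin m),
        (1 / 2 : ℝ) * (Real.cos (⟪p.1 - p.2, φ⟫ : ℝ) + 1) ∂(ν.prod ν)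
        = (1 / 2) * (Real.exp (-(σ ^ 2) * ‖φ‖ ^ 2) + 1) := by
      rw [integral_const_mul, integral_add hintcos (integrable_const 1), hcos,
        integral_const]
      simp
    exact this
  · set t : ℝ := ‖φ‖ ^ 2 with htdef
    have h2t : (0:ℝ) < 2 * t - 1 := by simp only [htdef]; linarith
    have hmul : -Real.log (2 * t - 1) ≤ σ ^ 2 * t := by
      have := (div_le_iff₀ ht0).mp hvar
      linarith
    have hexp : Real.exp (-(σ ^ 2) * t) ≤ 2 * t - 1 := by
      have h1 : -(σ ^ 2) * t ≤ Real.log (2 * t - 1) := by nlinarith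
      calc Real.exp (-(σ ^ 2) * t) ≤ Real.exp (Real.log (2 * t - 1)) :=
            Real.exp_le_exp.mpr h1
        _ = 2 * t - 1 := Real.exp_log h2t
    linarith
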